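/- Let A be an n×r real matrix of full column rank, A_□ a dominant r×r submatrix of A, and A_◇ a maximal-volume r×r submatrix. Then |det(A_□)| ≥ |det(A_◇)| / r^{r/2}. -/

import Mathlib

open Matrix BigOperators Filter

theorem Matrix.isHermitian_transpose_mul_self {m n α : Type*} [Fintype m]
    [NonUnitalCommSemiring α] [StarRing α] [TrivialStar α] (A : Matrix m n α) :
    (Aᵀ * A).IsHermitian := by
  rw [IsHermitian, conjTranspose_eq_transpose_of_trivial, transpose_mul, transpose_transpose]

noncomputable def sval {m n : ℕ} (A : Matrix (Fin m) (Fin n) ℝ) (k : Fin n) : ℝ :=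
  Real.sqrt ((Matrix.isHermitian_transpose_mul_self A).eigenvalues
    (Tuple.sort (Matrix.isHermitian_transpose_mul_self A).eigenvalues (Fin.rev k)))

noncomputable def chebNorm {m n : ℕ} (A : Matrix (Fin m) (Fin n) ℝ) : ℝ :=
  ⨆ i, ⨆ j, |A i j|

noncomputable def frobNorm {m n : ℕ} (A : Matrix (Fin m) (Fin n) ℝ) : ℝ :=
  Real.sqrt (∑ i, ∑ j, (A i j) ^ 2)

lemma hadamard_bound {r : ℕ} (M : Matrix (Fin r) (Fin r) ℝ)
    (h : ∀ i j, |M i j| ≤ 1) : |M.det| ≤ Real.sqrt r ^ r := by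
  haveI : Fact (Module.finrank ℝ (EuclideanSpace ℝ (Fin r)) = r) :=
    ⟨by simp [finrank_euclideanSpace]⟩
  set b := EuclideanSpace.basisFun (Fin r) ℝ
  set o := b.toBasis.orientation
  set v : Fin r → EuclideanSpace ℝ (Fin r) := fun j => WithLp.toLp 2 (fun i => M i j) with hv
  have hdet : b.toBasis.det v = M.det := by
    rw [Module.Basis.det_apply]
    rfl
  have h1 : |M.det| = |o.volumeForm v| := by
    rw [o.volumeForm_robust' b, hdet]
  rw [h1]
  refine (o.abs_volumeForm_apply_le v).trans ?_
  have : ∀ j, ‖v j‖ ≤ Real.sqrt r := by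
    intro j
    rw [EuclideanSpace.norm_eq]
    apply Real.sqrt_le_sqrt
    calc ∑ i, ‖M i j‖ ^ 2 ≤ ∑ i : Fin r, 1 := by
          apply Finset.sum_le_sum
          intro i _
          have h1 := h i j
          have h2 := abs_nonneg (M i j)
          rw [Real.norm_eq_abs]
          nlinarith
      _ = (r : ℝ) := by simp
  calc ∏ j, ‖v j‖ ≤ ∏ _j : Fin r, Real.sqrt r :=
        Finset.prod_le_prod (fun i _ => norm_nonneg _) (fun i _ => this i)
    _ = Real.sqrt r ^ r := by simp

theorem stmt13 {n r : ℕ} (hr : r < n) (A : Matrix (Fin n) (Fin r) ℝ)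
    (hrank : A.rank = r) (Idom : Fin r → Fin n) (hIdom : Function.Injective Idom)
    (hinv : IsUnit (A.submatrix Idom id))
    (hdom : ∀ (i : Fin n) (p : Fin r), |(A * (A.submatrix Idom id)⁻¹) i p| ≤ 1)
    (Imax : Fin r → Fin n) (hImax : Function.Injective Imax)
    (hmax : ∀ I' : Fin r → Fin n, Function.Injective I' →
      |(A.submatrix I' id).det| ≤ |(A.submatrix Imax id).det|) :
    |(A.submatrix Idom id).det| ≥ |(A.submatrix Imax id).det| / Real.sqrt r ^ r := by
  set S := A.submatrix Idom id with hS
  set B := A * S⁻¹ with hB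
  have hSdet : IsUnit S.det := (Matrix.isUnit_iff_isUnit_det S).mp hinv
  have hBS : B * S = A := by
    rw [hB, Matrix.mul_assoc, Matrix.nonsing_inv_mul S hSdet, Matrix.mul_one]
  have key : A.submatrix Imax id = (B.submatrix Imax id) * S := by
    rw [← hBS]
    ext i j
    simp [Matrix.mul_apply, Matrix.submatrix_apply]
  have hdetfac : (A.submatrix Imax id).det = (B.submatrix Imax id).det * S.det := by
    rw [key, Matrix.det_mul]
  have hH : |(B.submatrix Imax id).det| ≤ Real.sqrt r ^ r :=
    hadamard_bound _ (fun i j => hdom (Imax i) j)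
  have hpos : 0 < Real.sqrt r ^ r := by
    rcases Nat.eq_zero_or_pos r with h0 | h0
    · simp [h0]
    · exact pow_pos (Real.sqrt_pos.mpr (by exact_mod_cast h0)) r
  rw [ge_iff_le, div_le_iff₀ hpos]
  calc |(A.submatrix Imax id).det| = |(B.submatrix Imax id).det| * |S.det| := by
        rw [hdetfac, abs_mul]
    _ ≤ Real.sqrt r ^ r * |S.det| := mul_le_mul_of_nonneg_right hH (abs_nonneg _)
    _ = |S.det| * Real.sqrt r ^ r := mul_comm _ _
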